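/- For complex s and nonnegative integers k, m, the Cayley continuant satisfies Cay_m(s;k) = m! · 2^m · P_m^{((k+s−2m)/2, (k−s−2m)/2)}(0), where P_m^{(α,β)} is the Jacobi polynomial. -/

import Mathlib

open Finset

/-- Falling factorial `r(r-1)⋯(r-j+1)`. -/
noncomputable def fallFac (r : ℂ) (j : ℕ) : ℂ := (descPochhammer ℂ j).eval r

/-- Rising factorial `r(r+1)⋯(r+j-1)`. -/
noncomputable def riseFac (r : ℂ) (j : ℕ) : ℂ := (ascPochhammer ℂ j).eval r

/-- Generalized binomial coefficient `C(a,k) = a(a-1)⋯(a-k+1)/k!`. -/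
noncomputable def gchoose (a : ℂ) (k : ℕ) : ℂ := fallFac a k / (k.factorial : ℂ)

/-- Cayley continuant `Cay_m(x;y)`. -/
noncomputable def Cay (m : ℕ) (x y : ℂ) : ℂ :=
  ∑ j ∈ range (m + 1),
    (m.choose j : ℂ) * fallFac ((x + y) / 2) j * riseFac ((x - y) / 2) (m - j)

/-- Jacobi polynomial. -/
noncomputable def Jacobi (α β : ℂ) (m : ℕ) (z : ℂ) : ℂ :=
  ∑ j ∈ range (m + 1),
    gchoose ((m : ℂ) + α) (m - j) * gchoose ((m : ℂ) + β) j *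
      ((z - 1) / 2) ^ j * ((z + 1) / 2) ^ (m - j)

/-- Rising factorial of `-r` equals `(-1)^n` times the falling factorial of `r`. -/
lemma riseFac_neg (r : ℂ) (n : ℕ) : riseFac (-r) n = (-1)^n * fallFac r n := by
  induction n with
  | zero => simp [riseFac, fallFac]
  | succ n ih =>
    simp only [riseFac, fallFac, ascPochhammer_succ_eval, descPochhammer_succ_eval] at *
    rw [ih]; ring

/-- `Cay_m(s;k) = m! · 2^m · P_m^{((k+s−2m)/2, (k−s−2m)/2)}(0)`. -/
theorem cayley_eq_jacobi_at_zero (s : ℂ) (k m : ℕ) :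
    Cay m s (k : ℂ) =
      (m.factorial : ℂ) * (2 : ℂ) ^ m *
        Jacobi (((k : ℂ) + s - 2 * m) / 2) (((k : ℂ) - s - 2 * m) / 2) m 0 := by
  rw [Cay, ← Finset.sum_range_reflect, Jacobi, Finset.mul_sum]
  refine Finset.sum_congr rfl fun j hj => ?_
  rw [Finset.mem_range, Nat.lt_succ_iff] at hj
  simp only [Nat.add_sub_cancel, Nat.sub_sub_self hj]
  have hA : (m : ℂ) + (((k : ℂ) + s - 2 * m) / 2) = (s + k) / 2 := by ring
  have hB : (m : ℂ) + (((k : ℂ) - s - 2 * m) / 2) = ((k : ℂ) - s) / 2 := by ring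
  have hC : (s - (k : ℂ)) / 2 = -(((k : ℂ) - s) / 2) := by ring
  rw [hA, hB, hC, riseFac_neg, gchoose, gchoose, Nat.cast_choose ℂ (Nat.sub_le m j)]
  have h2 : (2:ℂ)^m = 2^j * 2^(m-j) := by rw [← pow_add, Nat.add_sub_cancel' hj]
  have f1 : ((m-j).factorial : ℂ) ≠ 0 := Nat.cast_ne_zero.mpr (Nat.factorial_ne_zero _)
  have f2 : ((m-(m-j)).factorial : ℂ) ≠ 0 := Nat.cast_ne_zero.mpr (Nat.factorial_ne_zero _)
  have f3 : (j.factorial : ℂ) ≠ 0 := Nat.cast_ne_zero.mpr (Nat.factorial_ne_zero _)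
  rw [Nat.sub_sub_self hj] at f2 ⊢
  rw [h2]
  field_simp
  simp only [zero_sub, zero_add, div_pow, one_pow]
  field_simp
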